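/- arXiv:1701.07313 — 2 statements merged into one kernel-verified Lean document; each statement's English description precedes it below -/
import Mathlib

section
/- For all n ≥ 1 and k ≥ 0, Σ_{S ⊆ {1,…,n}} C(|S|·(n−|S|), k) = Σ_G 2^{c(G)}, where the right-hand sum runs over all bipartite simple graphs G on the labeled vertex set {1,…,n} with exactly k edges, and c(G) denotes the number of connected components of G (isolated vertices count as components). -/
open scoped Classical

namespace Stmt5Aux

open SimpleGraph Finset

variable {V : Type*} [Fintype V] [DecidableEq V]

/-- Every edge of `G` crosses the cut `(S, Sᶜ)`. -/
def Crosses (G : SimpleGraph V) (S : Finset V) : Prop :=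
  ∀ ⦃u v⦄, G.Adj u v → (u ∈ S ↔ v ∉ S)

/-- The set of potential crossing edges of the cut `(S, Sᶜ)`. -/
noncomputable def crossF (S : Finset V) : Finset (Sym2 V) :=
  (S ×ˢ Sᶜ).image fun p => s(p.1, p.2)

lemma mem_crossF {S : Finset V} {e : Sym2 V} :
    e ∈ crossF S ↔ ∃ a b, a ∈ S ∧ b ∉ S ∧ e = s(a, b) := by
  simp only [crossF, Finset.mem_image, Finset.mem_product, Finset.mem_compl, Prod.exists]
  constructor
  · rintro ⟨a, b, ⟨ha, hb⟩, rfl⟩; exact ⟨a, b, ha, hb, rfl⟩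
  · rintro ⟨a, b, ha, hb, rfl⟩; exact ⟨a, b, ⟨ha, hb⟩, rfl⟩

lemma not_isDiag_of_mem_crossF {S : Finset V} {e : Sym2 V} (he : e ∈ crossF S) :
    ¬ e.IsDiag := by
  obtain ⟨a, b, ha, hb, rfl⟩ := mem_crossF.1 he
  simp only [Sym2.isDiag_iff_proj_eq]
  rintro rfl; exact hb ha

lemma card_crossF (S : Finset V) : (crossF S).card = S.card * Sᶜ.card := by
  rw [crossF, Finset.card_image_of_injOn, Finset.card_product]
  rintro ⟨a, b⟩ hab ⟨c, d⟩ hcd h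
  simp only [Finset.mem_coe, Finset.mem_product, Finset.mem_compl] at hab hcd
  rw [Sym2.eq_iff] at h
  rcases h with ⟨rfl, rfl⟩ | ⟨rfl, rfl⟩
  · rfl
  · exact absurd hab.1 hcd.2

lemma crosses_iff_subset {G : SimpleGraph V} {S : Finset V} :
    Crosses G S ↔ G.edgeSet ⊆ ↑(crossF S) := by
  constructor
  · intro h e he
    induction e with
    | h u v =>
      rw [SimpleGraph.mem_edgeSet] at he
      by_cases hu : u ∈ S
      · exact mem_crossF.2 ⟨u, v, hu, (h he).1 hu, rfl⟩
      · have hv : v ∈ S := by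
          by_contra hv
          exact hu ((h he).2 hv)
        exact mem_crossF.2 ⟨v, u, hv, fun hu' => hu hu', Sym2.eq_swap⟩
  · intro h u v huv
    have : s(u, v) ∈ crossF S := h ((SimpleGraph.mem_edgeSet _).2 huv)
    obtain ⟨a, b, ha, hb, hab⟩ := mem_crossF.1 this
    rw [Sym2.eq_iff] at hab
    rcases hab with ⟨rfl, rfl⟩ | ⟨rfl, rfl⟩
    · exact ⟨fun _ => hb, fun _ => ha⟩
    · exact ⟨fun h' => absurd h' hb, fun h' => absurd ha h'⟩

lemma diff_diag_eq {E : Finset (Sym2 V)} (hE : ∀ e ∈ E, ¬ e.IsDiag) :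
    (↑E : Set (Sym2 V)) \ {e : Sym2 V | e.IsDiag} = ↑E := by
  ext e
  simp only [Set.mem_diff, Finset.mem_coe, Set.mem_setOf_eq]
  exact ⟨fun h => h.1, fun h => ⟨h, hE e h⟩⟩

/-- Counting graphs all of whose edges cross the cut `(S, Sᶜ)` and which have `k` edges. -/
lemma cardA (S : Finset V) (k : ℕ) :
    (Finset.univ.filter fun G : SimpleGraph V =>
        Crosses G S ∧ G.edgeSet.ncard = k).card = (S.card * Sᶜ.card).choose k := by
  rw [← card_crossF S, ← Finset.card_powersetCard]
  refine Finset.card_bij' (fun G _ => G.edgeSet.toFinset)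
    (fun E _ => SimpleGraph.fromEdgeSet ↑E) ?_ ?_ ?_ ?_
  · intro G hG
    rw [Finset.mem_filter] at hG
    rw [Finset.mem_powersetCard]
    constructor
    · intro e he
      rw [Set.mem_toFinset] at he
      exact crosses_iff_subset.1 hG.2.1 he
    · rw [← Set.ncard_eq_toFinset_card']
      exact hG.2.2
  · intro E hE
    rw [Finset.mem_powersetCard] at hE
    have hd : (↑E : Set (Sym2 V)) \ {e : Sym2 V | e.IsDiag} = ↑E :=
      diff_diag_eq fun e he => not_isDiag_of_mem_crossF (hE.1 he)
    rw [Finset.mem_filter]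
    refine ⟨Finset.mem_univ _, ?_, ?_⟩
    · rw [crosses_iff_subset, SimpleGraph.edgeSet_fromEdgeSet,
        show (↑E : Set (Sym2 V)) \ Sym2.diagSet = ↑E from hd]
      exact fun e he => hE.1 he
    · rw [SimpleGraph.edgeSet_fromEdgeSet,
        show (↑E : Set (Sym2 V)) \ Sym2.diagSet = ↑E from hd, Set.ncard_coe_finset]
      exact hE.2
  · intro G _
    rw [Set.coe_toFinset, SimpleGraph.fromEdgeSet_edgeSet]
  · intro E hE
    rw [Finset.mem_powersetCard] at hE
    apply Finset.coe_injective
    rw [Set.coe_toFinset, SimpleGraph.edgeSet_fromEdgeSet,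
      show (↑E : Set (Sym2 V)) \ Sym2.diagSet = ↑E from
        diff_diag_eq fun e he => not_isDiag_of_mem_crossF (hE.1 he)]

lemma walk_const {G : SimpleGraph V} {f : V → Bool}
    (hf : ∀ u v, G.Adj u v → f u = f v) {u v : V} (h : G.Reachable u v) : f u = f v := by
  obtain ⟨w⟩ := h
  induction w with
  | nil => rfl
  | cons h _ ih => exact (hf _ _ h).trans ih

/-- Cuts crossed by all edges of `G` correspond to component sign choices, given a
proper `Bool` coloring `f₀`. -/
noncomputable def cutEquiv (G : SimpleGraph V) (f₀ : V → Bool)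
    (hf₀ : ∀ u v, G.Adj u v → f₀ u ≠ f₀ v) :
    {S : Finset V // Crosses G S} ≃ (G.ConnectedComponent → Bool) where
  toFun S := fun C => xor (decide (C.out ∈ S.1)) (f₀ C.out)
  invFun ε := ⟨Finset.univ.filter fun v => xor (f₀ v) (ε (G.connectedComponentMk v)) = true,
    by
      intro u v huv
      have hc : G.connectedComponentMk u = G.connectedComponentMk v :=
        SimpleGraph.ConnectedComponent.eq.2 huv.reachable
      have hne := hf₀ _ _ huv
      simp only [Finset.mem_filter, Finset.mem_univ, true_and, hc]
      cases hu : f₀ u <;> cases hv : f₀ v <;>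
        simp_all <;> cases ε (G.connectedComponentMk v) <;> simp_all⟩
  left_inv := by
    rintro ⟨S, hS⟩
    ext v
    simp only [Finset.mem_filter, Finset.mem_univ, true_and]
    have hconst : ∀ x y, G.Reachable x y →
        xor (decide (x ∈ S)) (f₀ x) = xor (decide (y ∈ S)) (f₀ y) := by
      intro x y hxy
      refine walk_const (f := fun z => xor (decide (z ∈ S)) (f₀ z)) ?_ hxy
      intro a b hab
      have h1 := hS hab
      have h2 := hf₀ _ _ hab
      by_cases ha : a ∈ S <;> by_cases hb : b ∈ S <;>
        cases hfa : f₀ a <;> cases hfb : f₀ b <;> simp_all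
    have := hconst ((G.connectedComponentMk v).out) v
      (SimpleGraph.ConnectedComponent.eq.1 ((G.connectedComponentMk v).out_eq))
    rw [this]
    by_cases hv : v ∈ S <;> cases hfv : f₀ v <;> simp_all
  right_inv := by
    intro ε
    funext C
    simp only [Finset.mem_filter, Finset.mem_univ, true_and]
    have hout : G.connectedComponentMk C.out = C := C.out_eq
    rw [hout]
    cases hf : f₀ C.out <;> cases hε : ε C <;> simp_all
end Stmt5Aux

open Stmt5Aux SimpleGraph Finset in
lemma cardB {V : Type*} [Fintype V] [DecidableEq V] (G : SimpleGraph V) :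
    (Finset.univ.filter fun S : Finset V => Crosses G S).card =
      if G.Colorable 2 then 2 ^ Nat.card G.ConnectedComponent else 0 := by
  split_ifs with h
  · obtain ⟨c⟩ := h
    let c' : G.Coloring Bool := G.recolorOfEquiv finTwoEquiv c
    have hf₀ : ∀ u v, G.Adj u v → c' u ≠ c' v := fun u v huv => c'.valid huv
    have e := cutEquiv G (fun v => c' v) hf₀
    have h1 : (Finset.univ.filter fun S : Finset V => Crosses G S).card
        = Nat.card {S : Finset V // Crosses G S} := by
      rw [Nat.card_eq_fintype_card, Fintype.card_subtype]
    rw [h1, Nat.card_congr e, Nat.card_fun, Nat.card_eq_fintype_card (α := Bool),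
      Fintype.card_bool]
  · rw [Finset.card_eq_zero, Finset.filter_eq_empty_iff]
    intro S _ hS
    exact h ((SimpleGraph.Coloring.mk (fun v => decide (v ∈ S))
      (fun {u v} huv => by
        have := hS huv
        by_cases hu : u ∈ S <;> by_cases hv : v ∈ S <;> simp_all)).colorable.mono
      (by rw [Fintype.card_bool]))

open Stmt5Aux SimpleGraph Finset in
/-- `Σ_{S ⊆ {1,…,n}} C(|S|·(n−|S|), k) = Σ_G 2^{c(G)}`, the sum on the right running over
all bipartite simple graphs `G` on `{1,…,n}` with `k` edges, `c(G)` the number of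
connected components. -/
theorem statement5 (n k : ℕ) (hn : 1 ≤ n) :
    ∑ S : Finset (Fin n), (S.card * (n - S.card)).choose k
      = ∑ G ∈ Finset.univ.filter
          (fun G : SimpleGraph (Fin n) => G.Colorable 2 ∧ G.edgeSet.ncard = k),
          2 ^ (Nat.card G.ConnectedComponent) := by
  calc ∑ S : Finset (Fin n), (S.card * (n - S.card)).choose k
      = ∑ S : Finset (Fin n), (Finset.univ.filter fun G : SimpleGraph (Fin n) =>
          Crosses G S ∧ G.edgeSet.ncard = k).card := by
        refine Finset.sum_congr rfl fun S _ => ?_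
        rw [cardA, Finset.card_compl, Fintype.card_fin]
    _ = ∑ S : Finset (Fin n), ∑ G : SimpleGraph (Fin n),
          if Crosses G S ∧ G.edgeSet.ncard = k then 1 else 0 := by
        simp [Finset.sum_boole]
    _ = ∑ G : SimpleGraph (Fin n), ∑ S : Finset (Fin n),
          if Crosses G S ∧ G.edgeSet.ncard = k then 1 else 0 := Finset.sum_comm
    _ = ∑ G : SimpleGraph (Fin n),
          if G.Colorable 2 ∧ G.edgeSet.ncard = k then 2 ^ Nat.card G.ConnectedComponent
          else 0 := by
        refine Finset.sum_congr rfl fun G _ => ?_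
        by_cases hk : G.edgeSet.ncard = k
        · simp only [hk, and_true, Finset.sum_boole]
          rw [show ((Finset.univ.filter fun S : Finset (Fin n) => Crosses G S).card : ℕ)
            = _ from cardB G]
          split_ifs <;> simp_all
        · simp [hk]
    _ = ∑ G ∈ Finset.univ.filter
          (fun G : SimpleGraph (Fin n) => G.Colorable 2 ∧ G.edgeSet.ncard = k),
          2 ^ (Nat.card G.ConnectedComponent) := (Finset.sum_filter _ _).symm
end

section
/- The complement ℝ³ ∖ ⋃_{H ∈ 𝒥_3} H has exactly 64 connected components. -/
open scoped Classical


/-- The hyperplane arrangement 𝒥ₙ, encoded as a finite set of pairs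
(normal vector, constant): `H_{ij} : x_i + x_j = 1` for `i < j`,
`x_i = 0`, and `x_i = 1`. -/
noncomputable def Jn (n : ℕ) : Finset ((Fin n → ℝ) × ℝ) :=
  (((Finset.univ : Finset (Fin n × Fin n)).filter fun p => p.1 < p.2).image
      fun p => ((fun k => if k = p.1 ∨ k = p.2 then (1 : ℝ) else 0), (1 : ℝ)))
  ∪ (Finset.univ.image fun i : Fin n => (Pi.single i (1 : ℝ), (0 : ℝ)))
  ∪ (Finset.univ.image fun i : Fin n => (Pi.single i (1 : ℝ), (1 : ℝ)))

/-- A subarrangement is central if the corresponding hyperplanes have a common point. -/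
def IsCentral {n : ℕ} (B : Finset ((Fin n → ℝ) × ℝ)) : Prop :=
  ∃ x : Fin n → ℝ, ∀ p ∈ B, ∑ i, p.1 i * x i = p.2

/-- The rank of a subarrangement: dimension of the span of the normal vectors. -/
noncomputable def arrRank {n : ℕ} (B : Finset ((Fin n → ℝ) × ℝ)) : ℕ :=
  Module.finrank ℝ (Submodule.span ℝ (Prod.fst '' (B : Set ((Fin n → ℝ) × ℝ))))

/-- The characteristic polynomial `χ_𝒜(t) = Σ_ℬ (-1)^{|ℬ|} t^{n - rank ℬ}`,
sum over central subarrangements ℬ of 𝒜. -/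
noncomputable def charPoly {n : ℕ} (𝒜 : Finset ((Fin n → ℝ) × ℝ)) : Polynomial ℤ :=
  ∑ B ∈ 𝒜.powerset.filter (fun B => IsCentral B),
    (-1) ^ B.card * Polynomial.X ^ (n - arrRank B)

/-- The complement of the union of the hyperplanes of 𝒜. -/
def hypComplement {n : ℕ} (𝒜 : Finset ((Fin n → ℝ) × ℝ)) : Set (Fin n → ℝ) :=
  {x | ∀ p ∈ 𝒜, ∑ i, p.1 i * x i ≠ p.2}

/-- The chambers of 𝒜: connected components of the complement of the hyperplanes. -/
def chambers {n : ℕ} (𝒜 : Finset ((Fin n → ℝ) × ℝ)) : Set (Set (Fin n → ℝ)) :=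
  {C | ∃ x ∈ hypComplement 𝒜, C = connectedComponentIn (hypComplement 𝒜) x}

namespace Stmt18Aux

/-! ### The nine linear forms and constants of `Jn 3` -/

noncomputable def lf : Fin 9 → (Fin 3 → ℝ) → ℝ :=
  ![fun x => x 0 + x 1, fun x => x 0 + x 2, fun x => x 1 + x 2,
    fun x => x 0, fun x => x 1, fun x => x 2,
    fun x => x 0, fun x => x 1, fun x => x 2]

noncomputable def cst : Fin 9 → ℝ := ![1,1,1,0,0,0,1,1,1]

noncomputable def pr (i : Fin 3) : (Fin 3 → ℝ) →ₗ[ℝ] ℝ := LinearMap.proj i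

noncomputable def lm : Fin 9 → ((Fin 3 → ℝ) →ₗ[ℝ] ℝ) :=
  ![pr 0 + pr 1, pr 0 + pr 2, pr 1 + pr 2, pr 0, pr 1, pr 2, pr 0, pr 1, pr 2]

lemma lf_eq_lm (k : Fin 9) (x : Fin 3 → ℝ) : lf k x = lm k x := by
  fin_cases k <;> rfl

lemma compl_char (x : Fin 3 → ℝ) :
    x ∈ hypComplement (Jn 3) ↔ ∀ k, lf k x ≠ cst k := by
  simp only [hypComplement, Jn, Set.mem_setOf_eq, Finset.mem_union, Finset.mem_image,
    Finset.mem_filter, Finset.mem_univ, true_and, Prod.exists]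
  constructor
  · intro hx k
    have h01 := hx _ (Or.inl (Or.inl ⟨0, 1, by decide, rfl⟩))
    have h02 := hx _ (Or.inl (Or.inl ⟨0, 2, by decide, rfl⟩))
    have h12 := hx _ (Or.inl (Or.inl ⟨1, 2, by decide, rfl⟩))
    have z0 := hx _ (Or.inl (Or.inr ⟨0, rfl⟩))
    have z1 := hx _ (Or.inl (Or.inr ⟨1, rfl⟩))
    have z2 := hx _ (Or.inl (Or.inr ⟨2, rfl⟩))
    have o0 := hx _ (Or.inr ⟨0, rfl⟩)
    have o1 := hx _ (Or.inr ⟨1, rfl⟩)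
    have o2 := hx _ (Or.inr ⟨2, rfl⟩)
    simp only [Fin.sum_univ_three, Pi.single_apply] at h01 h02 h12 z0 z1 z2 o0 o1 o2
    simp (config := { decide := true }) only [] at h01 h02 h12 z0 z1 z2 o0 o1 o2
    norm_num at h01 h02 h12 z0 z1 z2 o0 o1 o2
    fin_cases k
    exacts [h01, h02, h12, z0, z1, z2, o0, o1, o2]
  · intro h p hp
    have h01 : x 0 + x 1 ≠ 1 := h 0
    have h02 : x 0 + x 2 ≠ 1 := h 1
    have h12 : x 1 + x 2 ≠ 1 := h 2
    have z0 : x 0 ≠ 0 := h 3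
    have z1 : x 1 ≠ 0 := h 4
    have z2 : x 2 ≠ 0 := h 5
    have o0 : x 0 ≠ 1 := h 6
    have o1 : x 1 ≠ 1 := h 7
    have o2 : x 2 ≠ 1 := h 8
    rcases hp with ((⟨a, b, hab, rfl⟩ | ⟨a, rfl⟩) | ⟨a, rfl⟩) <;>
      [ (fin_cases a <;> fin_cases b <;> first
          | exact absurd hab (by decide)
          | (simp (config := { decide := true }) only [Fin.sum_univ_three];
             norm_num; assumption));
        (fin_cases a <;> (simp (config := { decide := true }) only
            [Fin.sum_univ_three, Pi.single_apply]; norm_num; assumption));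
        (fin_cases a <;> (simp (config := { decide := true }) only
            [Fin.sum_univ_three, Pi.single_apply]; norm_num; assumption))]

/-! ### Sign vectors, open cells -/

noncomputable def sgn (x : Fin 3 → ℝ) : Fin 9 → Bool := fun k => decide (cst k < lf k x)

noncomputable def half (s : Fin 9 → Bool) (k : Fin 9) : Set (Fin 3 → ℝ) :=
  if s k then {x | cst k < lf k x} else {x | lf k x < cst k}

noncomputable def cell (s : Fin 9 → Bool) : Set (Fin 3 → ℝ) := ⋂ k, half s k

lemma isOpen_half (s : Fin 9 → Bool) (k : Fin 9) : IsOpen (half s k) := by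
  have h1 : {x : Fin 3 → ℝ | cst k < lf k x} = lm k ⁻¹' Set.Ioi (cst k) := by
    ext x; simp [lf_eq_lm]
  have h2 : {x : Fin 3 → ℝ | lf k x < cst k} = lm k ⁻¹' Set.Iio (cst k) := by
    ext x; simp [lf_eq_lm]
  unfold half
  split
  · rw [h1]; exact (lm k).continuous_of_finiteDimensional.isOpen_preimage _ isOpen_Ioi
  · rw [h2]; exact (lm k).continuous_of_finiteDimensional.isOpen_preimage _ isOpen_Iio

lemma convex_half (s : Fin 9 → Bool) (k : Fin 9) : Convex ℝ (half s k) := by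
  have h1 : {x : Fin 3 → ℝ | cst k < lf k x} = lm k ⁻¹' Set.Ioi (cst k) := by
    ext x; simp [lf_eq_lm]
  have h2 : {x : Fin 3 → ℝ | lf k x < cst k} = lm k ⁻¹' Set.Iio (cst k) := by
    ext x; simp [lf_eq_lm]
  unfold half
  split
  · rw [h1]; exact (convex_Ioi (cst k)).linear_preimage (lm k)
  · rw [h2]; exact (convex_Iio (cst k)).linear_preimage (lm k)

lemma isOpen_cell (s : Fin 9 → Bool) : IsOpen (cell s) :=
  isOpen_iInter_of_finite (isOpen_half s)

lemma convex_cell (s : Fin 9 → Bool) : Convex ℝ (cell s) :=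
  convex_iInter (convex_half s)

lemma mem_cell_sgn {x : Fin 3 → ℝ} (hx : x ∈ hypComplement (Jn 3)) : x ∈ cell (sgn x) := by
  rw [cell, Set.mem_iInter]
  intro k
  have hne := (compl_char x).mp hx k
  unfold half
  by_cases h : cst k < lf k x
  · rw [if_pos (by simp [sgn, h])]; exact h
  · rw [if_neg (by simp [sgn, h])]; exact lt_of_le_of_ne (not_lt.mp h) hne

lemma cell_subset (s : Fin 9 → Bool) : cell s ⊆ hypComplement (Jn 3) := by
  intro y hy
  rw [compl_char]
  intro k
  have hk := Set.mem_iInter.mp hy k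
  unfold half at hk
  split at hk
  · exact ne_of_gt hk
  · exact ne_of_lt hk

lemma cell_disjoint {s t : Fin 9 → Bool} (hst : s ≠ t) : Disjoint (cell s) (cell t) := by
  obtain ⟨k, hk⟩ := Function.ne_iff.mp hst
  rw [Set.disjoint_left]
  intro y hys hyt
  have h1 := Set.mem_iInter.mp hys k
  have h2 := Set.mem_iInter.mp hyt k
  unfold half at h1 h2
  cases hsk : s k <;> cases htk : t k <;> (try simp [hsk, htk] at hk) <;>
    rw [hsk] at h1 <;> rw [htk] at h2 <;> simp at h1 h2 <;> exact absurd h2 (not_lt.mpr h1.le)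

lemma comp_eq {x : Fin 3 → ℝ} (hx : x ∈ hypComplement (Jn 3)) :
    connectedComponentIn (hypComplement (Jn 3)) x = cell (sgn x) := by
  apply Set.Subset.antisymm
  · set v : Set (Fin 3 → ℝ) := ⋃ k, half (fun j => !(sgn x j)) k with hv
    have hvopen : IsOpen v := isOpen_iUnion (isOpen_half _)
    have hdisj : Disjoint (cell (sgn x)) v := by
      rw [Set.disjoint_left]
      intro y hy hyv
      obtain ⟨k, hk⟩ := Set.mem_iUnion.mp hyv
      have h1 := Set.mem_iInter.mp hy k
      cases hsk : sgn x k <;> simp [half, hsk] at h1 hk <;>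
        exact absurd hk (not_lt.mpr h1.le)
    have hsub : hypComplement (Jn 3) ⊆ cell (sgn x) ∪ v := by
      intro y hy
      by_cases h : y ∈ cell (sgn x)
      · exact Or.inl h
      · refine Or.inr ?_
        rw [cell, Set.mem_iInter] at h
        push_neg at h
        obtain ⟨k, hk⟩ := h
        refine Set.mem_iUnion.mpr ⟨k, ?_⟩
        have hne := (compl_char y).mp hy k
        cases hsk : sgn x k <;> simp [half, hsk] at hk ⊢ <;>
          first
            | exact lt_of_le_of_ne hk (Ne.symm hne)
            | exact lt_of_le_of_ne hk hne
    exact IsPreconnected.subset_left_of_subset_union (isOpen_cell _) hvopen hdisj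
      ((connectedComponentIn_subset _ _).trans hsub)
      ⟨x, mem_connectedComponentIn hx, mem_cell_sgn hx⟩
      isPreconnected_connectedComponentIn
  · exact (convex_cell _).isPreconnected.subset_connectedComponentIn
      (mem_cell_sgn hx) (cell_subset _)

end Stmt18Aux

namespace Stmt18Aux

/-! ### Integer model (scaled by 20) and the admissible sign vectors -/

def lfz : Fin 9 → (Fin 3 → ℤ) → ℤ :=
  ![fun x => x 0 + x 1, fun x => x 0 + x 2, fun x => x 1 + x 2,
    fun x => x 0, fun x => x 1, fun x => x 2,
    fun x => x 0, fun x => x 1, fun x => x 2]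

def cstz : Fin 9 → ℤ := ![20,20,20,0,0,0,20,20,20]

def predB (s : Fin 9 → Bool) : Bool :=
  (!s 6 || s 3) && (!s 7 || s 4) && (!s 8 || s 5) &&
  (s 3 || s 7 || !s 0) && (s 4 || s 6 || !s 0) &&
  (!(s 6 && s 4) || s 0) && (!(s 7 && s 3) || s 0) &&
  (s 3 || s 8 || !s 1) && (s 5 || s 6 || !s 1) &&
  (!(s 6 && s 5) || s 1) && (!(s 8 && s 3) || s 1) &&
  (s 4 || s 8 || !s 2) && (s 5 || s 7 || !s 2) &&
  (!(s 7 && s 5) || s 2) && (!(s 8 && s 4) || s 2)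

def wz (s : Fin 9 → Bool) : Fin 3 → ℤ := fun i =>
  let p : Fin 3 → Bool := fun j => s ⟨3 + j.1, by omega⟩
  let q : Fin 3 → Bool := fun j => s ⟨6 + j.1, by omega⟩
  let L : Fin 3 → Bool := fun j => !p j
  let H : Fin 3 → Bool := fun j => p j && q j
  let M : Fin 3 → Bool := fun j => p j && !q j
  let pbn : Fin 3 → Fin 3 → Bool := fun a b => s ⟨a.1 + b.1 - 1, by omega⟩
  let cnt : (Fin 3 → Bool) → ℕ := fun f =>
    (if f 0 then 1 else 0) + (if f 1 then 1 else 0) + (if f 2 then 1 else 0)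
  let nL := cnt L
  let nH := cnt H
  let hIdx : Fin 3 := if H 0 then 0 else if H 1 then 1 else 2
  let lIdx : Fin 3 := if L 0 then 0 else if L 1 then 1 else 2
  let d : ℕ := cnt (fun j => decide (j ≠ i) && M j && pbn i j)
  let t : ℕ := (if M 0 && M 1 && s 0 then 1 else 0) +
    (if M 0 && M 2 && s 1 then 1 else 0) + (if M 1 && M 2 && s 2 then 1 else 0)
  if L i then (if nH = 1 then (if pbn i hIdx then -20 else -80) else -40)
  else if H i then (if nL = 1 then (if pbn i lIdx then 100 else 40) else 60)
  else (10 : ℤ) + (if d = 0 ∧ t = 0 then -4 else if d = 0 ∧ t = 1 then -9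
    else if d = 1 ∧ t = 1 then 4 else if d = 1 ∧ t = 2 then -2
    else if d = 2 ∧ t = 2 then 8 else if d = 2 ∧ t = 3 then 4 else 0)

set_option maxRecDepth 40000 in
lemma wz_ok : ∀ a b c d e f g h i : Bool,
    predB ![a,b,c,d,e,f,g,h,i] = true →
    ∀ k, (if (![a,b,c,d,e,f,g,h,i] : Fin 9 → Bool) k then
            cstz k < lfz k (wz ![a,b,c,d,e,f,g,h,i])
          else lfz k (wz ![a,b,c,d,e,f,g,h,i]) < cstz k) := by decide

lemma wz_ok' (s : Fin 9 → Bool) (hs : predB s = true) (k : Fin 9) :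
    if s k then cstz k < lfz k (wz s) else lfz k (wz s) < cstz k := by
  have e : s = ![s 0, s 1, s 2, s 3, s 4, s 5, s 6, s 7, s 8] := by
    funext j; fin_cases j <;> rfl
  rw [e] at hs ⊢
  exact wz_ok _ _ _ _ _ _ _ _ _ hs k

def table : Finset (Fin 9 → Bool) := Finset.univ.filter (fun s => predB s = true)

set_option maxRecDepth 40000 in
lemma card_table : table.card = 64 := by decide

/-! ### Scaling between the integer and real models -/

lemma lf_scale (k : Fin 9) (z : Fin 3 → ℤ) :
    lf k (fun i => (z i : ℝ) / 20) = ((lfz k z : ℤ) : ℝ) / 20 := by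
  fin_cases k
  · show (z 0 : ℝ)/20 + (z 1 : ℝ)/20 = ((z 0 + z 1 : ℤ) : ℝ)/20; push_cast; ring
  · show (z 0 : ℝ)/20 + (z 2 : ℝ)/20 = ((z 0 + z 2 : ℤ) : ℝ)/20; push_cast; ring
  · show (z 1 : ℝ)/20 + (z 2 : ℝ)/20 = ((z 1 + z 2 : ℤ) : ℝ)/20; push_cast; ring
  · rfl
  · rfl
  · rfl
  · rfl
  · rfl
  · rfl

lemma cst_scale (k : Fin 9) : cst k = ((cstz k : ℤ) : ℝ) / 20 := by
  fin_cases k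
  · show (1:ℝ) = ((20:ℤ):ℝ)/20; norm_num
  · show (1:ℝ) = ((20:ℤ):ℝ)/20; norm_num
  · show (1:ℝ) = ((20:ℤ):ℝ)/20; norm_num
  · show (0:ℝ) = ((0:ℤ):ℝ)/20; norm_num
  · show (0:ℝ) = ((0:ℤ):ℝ)/20; norm_num
  · show (0:ℝ) = ((0:ℤ):ℝ)/20; norm_num
  · show (1:ℝ) = ((20:ℤ):ℝ)/20; norm_num
  · show (1:ℝ) = ((20:ℤ):ℝ)/20; norm_num
  · show (1:ℝ) = ((20:ℤ):ℝ)/20; norm_num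

lemma scale_lt_iff (k : Fin 9) (z : Fin 3 → ℤ) :
    (cst k < lf k (fun i => (z i : ℝ) / 20) ↔ cstz k < lfz k z) ∧
    (lf k (fun i => (z i : ℝ) / 20) < cst k ↔ lfz k z < cstz k) := by
  rw [lf_scale, cst_scale]
  constructor
  · rw [div_lt_div_iff_of_pos_right (by norm_num : (0:ℝ) < 20)]
    exact Int.cast_lt
  · rw [div_lt_div_iff_of_pos_right (by norm_num : (0:ℝ) < 20)]
    exact Int.cast_lt

/-! ### Every point of the complement has an admissible sign vector -/

lemma pred_sgn {x : Fin 3 → ℝ} (hx : x ∈ hypComplement (Jn 3)) :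
    predB (sgn x) = true := by
  simp only [predB, Bool.and_eq_true, Bool.or_eq_true, Bool.not_eq_true', sgn,
    Bool.and_eq_false_iff, decide_eq_true_eq, decide_eq_false_iff_not]
  simp only [show lf 0 x = x 0 + x 1 from rfl, show lf 1 x = x 0 + x 2 from rfl,
    show lf 2 x = x 1 + x 2 from rfl, show lf 3 x = x 0 from rfl,
    show lf 4 x = x 1 from rfl, show lf 5 x = x 2 from rfl,
    show lf 6 x = x 0 from rfl, show lf 7 x = x 1 from rfl,
    show lf 8 x = x 2 from rfl,
    show cst 0 = (1:ℝ) from rfl, show cst 1 = (1:ℝ) from rfl,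
    show cst 2 = (1:ℝ) from rfl, show cst 3 = (0:ℝ) from rfl,
    show cst 4 = (0:ℝ) from rfl, show cst 5 = (0:ℝ) from rfl,
    show cst 6 = (1:ℝ) from rfl, show cst 7 = (1:ℝ) from rfl,
    show cst 8 = (1:ℝ) from rfl]
  repeat' apply And.intro
  all_goals
    rw [or_iff_not_imp_left]
    push_neg
    intro h
    try obtain ⟨h1, h2⟩ := h
    all_goals linarith

/-! ### The image of the sign map -/

lemma image_sgn : sgn '' hypComplement (Jn 3) = ↑table := by
  ext s
  constructor
  · rintro ⟨x, hx, rfl⟩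
    simp only [table, Finset.coe_filter, Set.mem_setOf_eq, Finset.mem_univ, true_and]
    exact pred_sgn hx
  · intro hs
    have hs' : predB s = true := by
      simpa only [table, Finset.coe_filter, Set.mem_setOf_eq, Finset.mem_univ, true_and] using hs
    refine ⟨fun i => ((wz s i : ℤ) : ℝ) / 20, ?_, ?_⟩
    · rw [compl_char]
      intro k
      have h := wz_ok' s hs' k
      by_cases hk : s k
      · rw [if_pos hk] at h
        exact ne_of_gt ((scale_lt_iff k (wz s)).1.mpr h)
      · rw [if_neg hk] at h
        exact ne_of_lt ((scale_lt_iff k (wz s)).2.mpr h)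
    · funext k
      have h := wz_ok' s hs' k
      by_cases hk : s k
      · rw [if_pos hk] at h
        simp only [sgn, hk]
        exact decide_eq_true ((scale_lt_iff k (wz s)).1.mpr h)
      · rw [if_neg hk] at h
        simp only [sgn]
        rw [Bool.eq_iff_iff]
        simp only [decide_eq_true_eq, Bool.eq_false_iff.mpr] 
        constructor
        · intro hlt
          exact absurd ((scale_lt_iff k (wz s)).2.mpr h) (not_lt.mpr hlt.le)
        · intro hsk; exact absurd hsk hk

/-! ### Chambers are cells -/

lemma chambers_eq : chambers (Jn 3) = cell '' (sgn '' hypComplement (Jn 3)) := by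
  ext C
  simp only [chambers, Set.mem_setOf_eq, Set.mem_image]
  constructor
  · rintro ⟨x, hx, rfl⟩
    exact ⟨sgn x, ⟨x, hx, rfl⟩, (comp_eq hx).symm⟩
  · rintro ⟨s, ⟨x, hx, rfl⟩, rfl⟩
    exact ⟨x, hx, (comp_eq hx).symm⟩

lemma cell_injOn : Set.InjOn cell (sgn '' hypComplement (Jn 3)) := by
  rintro s ⟨x, hx, rfl⟩ t ht heq
  by_contra hne
  have hd := cell_disjoint hne
  have h1 : x ∈ cell (sgn x) := mem_cell_sgn hx
  have h2 : x ∈ cell t := heq ▸ h1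
  exact Set.disjoint_left.mp hd h1 h2

end Stmt18Aux

/-- The complement of the union of the hyperplanes of `𝒥₃` has exactly 64 connected
components. -/
theorem statement18 : (chambers (Jn 3)).ncard = 64 := by
  rw [Stmt18Aux.chambers_eq, Set.ncard_image_of_injOn Stmt18Aux.cell_injOn,
    Stmt18Aux.image_sgn, Set.ncard_coe_finset, Stmt18Aux.card_table]
end
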